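/- arXiv:2406.04141 — 3 statements merged into one kernel-verified Lean document; each statement's English description precedes it below -/
import Mathlib

section
/- For the Coupon Collector Channel CC(n,k,R) with uniform input over all k-subsets of an n-element library, the conditional entropy H(X|Y) equals k^{-R} · Σ_{ℓ=1}^{min(k,R)} C(k,ℓ) · S(R,ℓ) · ℓ! · log₂ C(n-ℓ, k-ℓ). -/
/-- Stirling numbers of the second kind. -/
def stirling2 : ℕ → ℕ → ℕ
  | 0, 0 => 0 + 1
  | 0, _ + 1 => 0
  | _ + 1, 0 => 0
  | n + 1, k + 1 => (k + 1) * stirling2 n (k + 1) + stirling2 n k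

open Finset

lemma stirling2_eq_zero_of_lt : ∀ {R ℓ : ℕ}, R < ℓ → stirling2 R ℓ = 0
  | 0, _+1, _ => rfl
  | R+1, ℓ+1, h => by
    have h1 : R < ℓ + 1 := Nat.lt_of_succ_lt h
    have h2 : R < ℓ := Nat.lt_of_succ_lt_succ h
    show (ℓ + 1) * stirling2 R (ℓ+1) + stirling2 R ℓ = 0
    rw [stirling2_eq_zero_of_lt h1, stirling2_eq_zero_of_lt h2]; ring

lemma stirling2_zero_of_pos : ∀ {R : ℕ}, 0 < R → stirling2 R 0 = 0
  | _+1, _ => rfl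

lemma image_cons {α : Type*} [DecidableEq α] {R : ℕ} (a : α) (g : Fin R → α) :
    Finset.image (Fin.cons a g : Fin (R+1) → α) Finset.univ = insert a (Finset.image g Finset.univ) := by
  ext x; simp [Fin.exists_fin_succ, eq_comm]

lemma insert_eq_iff' {α : Type*} [DecidableEq α] {a : α} {t s : Finset α} :
    insert a t = s ↔ a ∈ s ∧ (t = s ∨ t = s.erase a) := by
  constructor
  · rintro rfl
    refine ⟨mem_insert_self a t, ?_⟩
    by_cases ha : a ∈ t
    · left; rw [insert_eq_self.2 ha]
    · right; rw [erase_insert ha]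
  · rintro ⟨ha, rfl | rfl⟩
    · exact insert_eq_self.2 ha
    · exact insert_erase ha

lemma card_image_filter {α : Type*} [Fintype α] [DecidableEq α] :
    ∀ (R : ℕ) (s : Finset α),
      (Finset.univ.filter fun f : Fin R → α => Finset.image f Finset.univ = s).card
        = stirling2 R s.card * s.card.factorial
  | 0, s => by
    rcases eq_or_ne s ∅ with rfl | hs
    · simp [Finset.filter_true_of_mem, Finset.univ_eq_empty_iff, stirling2]
    · obtain ⟨m, hm⟩ := Nat.exists_eq_succ_of_ne_zero (fun h => hs (card_eq_zero.mp h))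
      rw [hm]
      rw [Finset.filter_false_of_mem (fun f _ => by
        have : Finset.image f Finset.univ = (∅ : Finset α) := by simp
        rw [this]; exact fun h => hs h.symm)]
      simp [stirling2]
  | (R+1), s => by
    classical
    have key : (Finset.univ.filter fun f : Fin (R+1) → α => Finset.image f Finset.univ = s).card
        = (Finset.univ.filter fun p : α × (Fin R → α) =>
            insert p.1 (Finset.image p.2 Finset.univ) = s).card := by
      apply Finset.card_bij' (fun f _ => (f 0, f ∘ Fin.succ))
        (fun p _ => (Fin.cons p.1 p.2 : Fin (R+1) → α))
      · intro f hf
        simp only [mem_filter, mem_univ, true_and] at hf ⊢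
        have hfc : (Fin.cons (f 0) (f ∘ Fin.succ) : Fin (R+1) → α) = f := by
          ext i; refine Fin.cases ?_ ?_ i <;> simp
        rw [← image_cons, hfc]; exact hf
      · intro p hp
        simp only [mem_filter, mem_univ, true_and] at hp ⊢
        rw [image_cons]; exact hp
      · intro f _
        ext i
        refine Fin.cases ?_ ?_ i <;> simp
      · intro p _
        exact Prod.ext rfl (by ext i; simp)
    rw [key]
    have sum_eq : (Finset.univ.filter fun p : α × (Fin R → α) =>
            insert p.1 (Finset.image p.2 Finset.univ) = s).card
        = ∑ a : α, (Finset.univ.filter fun g : Fin R → α =>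
            insert a (Finset.image g Finset.univ) = s).card := by
      rw [Finset.card_filter, Fintype.sum_prod_type]
      congr 1; ext a; rw [Finset.card_filter]
    rw [sum_eq]
    have inner : ∀ a : α, (Finset.univ.filter fun g : Fin R → α =>
            insert a (Finset.image g Finset.univ) = s).card
        = if a ∈ s then stirling2 R s.card * s.card.factorial
            + stirling2 R (s.card - 1) * (s.card - 1).factorial else 0 := by
      intro a
      by_cases ha : a ∈ s
      · rw [if_pos ha]
        have hsplit : (Finset.univ.filter fun g : Fin R → α =>
            insert a (Finset.image g Finset.univ) = s)
          = (Finset.univ.filter fun g : Fin R → α => Finset.image g Finset.univ = s)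
            ∪ (Finset.univ.filter fun g : Fin R → α => Finset.image g Finset.univ = s.erase a) := by
          rw [← Finset.filter_or]
          apply Finset.filter_congr
          intro g _
          simp only [insert_eq_iff', ha, true_and]
        rw [hsplit, Finset.card_union_of_disjoint, card_image_filter R s,
          card_image_filter R (s.erase a), Finset.card_erase_of_mem ha]
        rw [Finset.disjoint_filter]
        intro g _ hg1 hg2
        exact Finset.erase_ne_self.mpr ha (hg2.symm.trans hg1)
      · rw [if_neg ha]
        rw [Finset.filter_false_of_mem, Finset.card_empty]
        intro g _ h
        exact ha (h ▸ mem_insert_self a _)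
    simp only [inner]
    rw [Finset.sum_ite_mem, Finset.univ_inter, Finset.sum_const, smul_eq_mul]
    generalize s.card = c
    cases c with
    | zero => simp [stirling2]
    | succ m =>
      show (m+1) * (stirling2 R (m+1) * (m+1).factorial + stirling2 R m * m.factorial)
        = ((m+1) * stirling2 R (m+1) + stirling2 R m) * (m+1).factorial
      rw [Nat.factorial_succ]
      ring

lemma card_supersets {n k : ℕ} (T : Finset (Fin n)) (hT : T.card ≤ k) :
    (Finset.univ.filter fun x : {x : Finset (Fin n) // x.card = k} => T ⊆ x.1).card
      = (n - T.card).choose (k - T.card) := by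
  classical
  have : (Finset.univ.filter fun x : {x : Finset (Fin n) // x.card = k} => T ⊆ x.1).card
      = (Finset.powersetCard (k - T.card) Tᶜ).card := by
    apply Finset.card_bij (fun x _ => x.1 \ T)
    · intro x hx
      simp only [mem_filter, mem_univ, true_and] at hx
      rw [Finset.mem_powersetCard]
      constructor
      · intro a ha
        simp only [Finset.mem_sdiff] at ha
        simpa [Finset.mem_compl] using ha.2
      · rw [Finset.card_sdiff_of_subset hx, x.2]
    · intro x hx y hy h
      simp only [mem_filter, mem_univ, true_and] at hx hy
      apply Subtype.ext
      rw [← Finset.sdiff_union_of_subset hx, ← Finset.sdiff_union_of_subset hy, h]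
    · intro u hu
      rw [Finset.mem_powersetCard] at hu
      have hdisj : Disjoint u T := by
        rw [Finset.disjoint_left]
        intro a hau haT
        exact (Finset.mem_compl.mp (hu.1 hau)) haT
      have hcard : (u ∪ T).card = k := by
        rw [Finset.card_union_of_disjoint hdisj, hu.2, Nat.sub_add_cancel hT]
      refine ⟨⟨u ∪ T, hcard⟩, ?_, ?_⟩
      · simp only [mem_filter, mem_univ, true_and]
        exact Finset.subset_union_right
      · rw [Finset.union_sdiff_right, Finset.sdiff_eq_self_of_disjoint hdisj]
  rw [this, Finset.card_powersetCard, Finset.card_compl, Fintype.card_fin]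

lemma sum_classify {n k R : ℕ} (hR : 0 < R) (x : Finset (Fin n)) (hx : x.card = k)
    (g : ℕ → ℝ) :
    (∑ y : Fin R → Fin n, if ∀ i, y i ∈ x then g ((Finset.image y Finset.univ).card) else 0)
      = ∑ ℓ ∈ Finset.Icc 1 (min k R),
          (k.choose ℓ * stirling2 R ℓ * ℓ.factorial : ℝ) * g ℓ := by
  classical
  have fib := Finset.sum_fiberwise_of_maps_to
    (s := (Finset.univ : Finset (Fin R → Fin n))) (t := (Finset.univ : Finset (Finset (Fin n))))
    (g := fun y => Finset.image y Finset.univ)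
    (fun y _ => Finset.mem_univ _)
    (f := fun y => if ∀ i, y i ∈ x then g ((Finset.image y Finset.univ).card) else 0)
  rw [← fib]
  have inner : ∀ T : Finset (Fin n),
      (∑ y ∈ Finset.univ.filter (fun y : Fin R → Fin n => Finset.image y Finset.univ = T),
        if ∀ i, y i ∈ x then g ((Finset.image y Finset.univ).card) else 0)
      = (stirling2 R T.card * T.card.factorial : ℝ) * if T ⊆ x then g T.card else 0 := by
    intro T
    have hy' : ∀ y ∈ Finset.univ.filter
        (fun y : Fin R → Fin n => Finset.image y Finset.univ = T),
        (if ∀ i, y i ∈ x then g ((Finset.image y Finset.univ).card) else 0)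
          = (if T ⊆ x then g T.card else 0) := by
      intro y hy
      simp only [mem_filter, mem_univ, true_and] at hy
      have him : (∀ i, y i ∈ x) ↔ T ⊆ x := by
        rw [← hy, Finset.image_subset_iff]
        simp
      rw [hy, if_congr him rfl rfl]
    rw [Finset.sum_congr rfl hy', Finset.sum_const, card_image_filter R T, nsmul_eq_mul]
    push_cast
    ring
  simp only [inner]
  simp only [mul_ite, mul_zero]
  rw [← Finset.sum_filter]
  have hpow : Finset.univ.filter (fun T : Finset (Fin n) => T ⊆ x) = x.powerset := by
    ext T
    simp only [mem_filter, mem_univ, true_and, Finset.mem_powerset]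
  rw [hpow]
  have hps : (∑ T ∈ x.powerset, (stirling2 R T.card * T.card.factorial : ℝ) * g T.card)
      = ∑ m ∈ Finset.range (k+1),
          (k.choose m) • ((stirling2 R m * m.factorial : ℝ) * g m) := by
    rw [← hx]
    exact Finset.sum_powerset_apply_card
      (f := fun m => (stirling2 R m * m.factorial : ℝ) * g m)
  rw [hps]
  refine (Finset.sum_subset_zero_on_sdiff ?_ ?_ ?_).symm
  · intro j hj
    simp only [Finset.mem_Icc] at hj
    simp only [Finset.mem_range]
    omega
  · intro j hj
    simp only [Finset.mem_sdiff, Finset.mem_range, Finset.mem_Icc, not_and, not_le] at hj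
    rcases Nat.eq_zero_or_pos j with rfl | hj0
    · rw [stirling2_zero_of_pos hR]; simp
    · have : R < j := by omega
      rw [stirling2_eq_zero_of_lt this]; simp
  · intro j _
    rw [nsmul_eq_mul]
    ring

/-- Conditional entropy `H(X|Y)` of the Coupon Collector Channel `CC(n,k,R)` with uniform
input over all `k`-subsets of an `n`-element library: it equals
`k^(-R) · Σ_ℓ C(k,ℓ)·S(R,ℓ)·ℓ!·log₂ C(n-ℓ,k-ℓ)`. -/
theorem stmt5 (n k R : ℕ) (hk : 0 < k) (hkn : k < n) (hR : 0 < R)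
    (joint : {x : Finset (Fin n) // x.card = k} → (Fin R → Fin n) → ℝ)
    (hjoint : ∀ x y, joint x y =
      (1 / (n.choose k : ℝ)) * (if ∀ i, y i ∈ x.1 then ((k : ℝ) ^ R)⁻¹ else 0)) :
    -(∑ x : {x : Finset (Fin n) // x.card = k}, ∑ y : Fin R → Fin n,
        joint x y * Real.logb 2 (joint x y / ∑ x' : {x : Finset (Fin n) // x.card = k}, joint x' y))
      = ((k : ℝ) ^ R)⁻¹ *
          ∑ ℓ ∈ Finset.Icc 1 (min k R),
            (k.choose ℓ * stirling2 R ℓ * ℓ.factorial : ℝ) *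
              Real.logb 2 (((n - ℓ).choose (k - ℓ) : ℝ)) := by
  classical
  set Cr : ℝ := (n.choose k : ℝ) with hCr_def
  set v : ℝ := ((k : ℝ) ^ R)⁻¹ with hv_def
  have hCr_pos : 0 < Cr := by
    rw [hCr_def]
    exact_mod_cast Nat.choose_pos (le_of_lt hkn)
  have hCr_ne : Cr ≠ 0 := ne_of_gt hCr_pos
  have hv_pos : 0 < v := by
    rw [hv_def]
    positivity
  have hv_ne : v ≠ 0 := ne_of_gt hv_pos
  have hcond : ∀ (y : Fin R → Fin n) (z : Finset (Fin n)),
      (∀ i, y i ∈ z) ↔ Finset.image y Finset.univ ⊆ z := by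
    intro y z
    rw [Finset.image_subset_iff]
    simp
  -- termwise rewrite
  have term_eq : ∀ (x : {x : Finset (Fin n) // x.card = k}) (y : Fin R → Fin n),
      joint x y * Real.logb 2 (joint x y / ∑ x' : {x : Finset (Fin n) // x.card = k}, joint x' y)
      = if ∀ i, y i ∈ x.1 then
          (1/Cr) * v * (-(Real.logb 2
            (((n - (Finset.image y Finset.univ).card).choose
              (k - (Finset.image y Finset.univ).card) : ℝ)))) else 0 := by
    intro x y
    by_cases h : ∀ i, y i ∈ x.1
    · rw [if_pos h]
      set T := Finset.image y Finset.univ with hT_def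
      have hTx : T ⊆ x.1 := (hcond y x.1).mp h
      have hTk : T.card ≤ k := by
        have := Finset.card_le_card hTx
        rwa [x.2] at this
      set Ct : ℝ := ((n - T.card).choose (k - T.card) : ℝ) with hCt_def
      have hCt_pos : 0 < Ct := by
        rw [hCt_def]
        have : k - T.card ≤ n - T.card := Nat.sub_le_sub_right (le_of_lt hkn) _
        exact_mod_cast Nat.choose_pos this
      have hCt_ne : Ct ≠ 0 := ne_of_gt hCt_pos
      have hM : (∑ x' : {x : Finset (Fin n) // x.card = k}, joint x' y) = 1/Cr * (Ct * v) := by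
        have h1 : ∀ x' : {x : Finset (Fin n) // x.card = k}, joint x' y = 1/Cr * (if T ⊆ x'.1 then v else 0) := by
          intro x'
          rw [hjoint x' y, if_congr (hcond y x'.1) rfl rfl]
        rw [Finset.sum_congr rfl (fun x' _ => h1 x')]
        rw [← Finset.mul_sum]
        congr 1
        rw [Finset.sum_ite, Finset.sum_const, Finset.sum_const_zero, add_zero, nsmul_eq_mul,
          card_supersets T hTk]
      have hj : joint x y = 1/Cr * v := by
        rw [hjoint x y, if_pos h]
      rw [hj, hM]
      have hratio : (1/Cr * v) / (1/Cr * (Ct * v)) = Ct⁻¹ := by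
        field_simp
      rw [hratio, Real.logb_inv]
    · rw [if_neg h]
      rw [hjoint x y, if_neg h, mul_zero, zero_mul]
  simp only [term_eq]
  -- inner sum via classification
  have inner_eq : ∀ x : {x : Finset (Fin n) // x.card = k},
      (∑ y : Fin R → Fin n, if ∀ i, y i ∈ x.1 then
          (1/Cr) * v * (-(Real.logb 2
            (((n - (Finset.image y Finset.univ).card).choose
              (k - (Finset.image y Finset.univ).card) : ℝ)))) else 0)
      = ∑ ℓ ∈ Finset.Icc 1 (min k R),
          (k.choose ℓ * stirling2 R ℓ * ℓ.factorial : ℝ) *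
            ((1/Cr) * v * (-(Real.logb 2 (((n - ℓ).choose (k - ℓ) : ℝ))))) := by
    intro x
    exact sum_classify hR x.1 x.2
      (fun ℓ => (1/Cr) * v * (-(Real.logb 2 (((n - ℓ).choose (k - ℓ) : ℝ)))))
  simp only [inner_eq]
  rw [Finset.sum_const, Finset.card_univ]
  have hcardS : Fintype.card {x : Finset (Fin n) // x.card = k} = n.choose k := by
    rw [Fintype.card_finset_len, Fintype.card_fin]
  rw [hcardS, nsmul_eq_mul]
  have hstep : ∀ ℓ ∈ Finset.Icc 1 (min k R),
      (k.choose ℓ * stirling2 R ℓ * ℓ.factorial : ℝ) *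
        ((1/Cr) * v * (-(Real.logb 2 (((n - ℓ).choose (k - ℓ) : ℝ)))))
      = (1/Cr) * v * (-((k.choose ℓ * stirling2 R ℓ * ℓ.factorial : ℝ) *
          Real.logb 2 (((n - ℓ).choose (k - ℓ) : ℝ)))) := fun ℓ _ => by ring
  rw [Finset.sum_congr rfl hstep, ← Finset.mul_sum, Finset.sum_neg_distrib]
  rw [← hCr_def]
  field_simp
end

section
/- In the Coupon Collector Channel CC(n,k,R), for every k-subset x of the library and every ℓ ∈ {1,…,min(k,R)}, the number of output sequences with exactly ℓ distinct motifs compatible with x is C(k,ℓ)·S(R,ℓ)·ℓ!, independent of x; and for every output sequence y with ℓ distinct motifs, the number of compatible inputs is C(n-ℓ,k-ℓ), independent of y. Hence the channel restricted to outputs with ℓ distinct motifs has a transition matrix whose rows are permutations of each other and whose columns are permutations of each other. -/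
open Function

section Aux
variable {α β γ : Type*}

/-- Functions with image a fixed finset `T` correspond to surjections onto `T`. -/
def imageEqEquiv [Fintype α] [DecidableEq β] (T : Finset β) :
    {y : α → β // Finset.image y Finset.univ = T} ≃ {g : α → ↥T // Surjective g} where
  toFun y := ⟨fun i => ⟨y.1 i, by have h := Finset.mem_image_of_mem y.1 (Finset.mem_univ i); rwa [y.2] at h⟩, by
    rintro ⟨b, hb⟩
    rw [← y.2] at hb
    obtain ⟨i, -, hi⟩ := Finset.mem_image.mp hb
    exact ⟨i, Subtype.ext hi⟩⟩
  invFun g := ⟨fun i => (g.1 i : β), by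
    ext b
    simp only [Finset.mem_image, Finset.mem_univ, true_and]
    constructor
    · rintro ⟨i, rfl⟩; exact (g.1 i).2
    · intro hb
      obtain ⟨i, hi⟩ := g.2 ⟨b, hb⟩
      exact ⟨i, congrArg Subtype.val hi⟩⟩
  left_inv y := Subtype.ext rfl
  right_inv g := Subtype.ext rfl

lemma card_surj_congr [Fintype α] [DecidableEq α] [Fintype β] [DecidableEq β] {α' β' : Type*}
    [Fintype α'] [DecidableEq α'] [Fintype β'] [DecidableEq β'] (e1 : α ≃ α') (e2 : β ≃ β') :
    Fintype.card {f : α → β // Surjective f}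
      = Fintype.card {f : α' → β' // Surjective f} := by
  apply Fintype.card_congr
  refine Equiv.subtypeEquiv (Equiv.arrowCongr e1 e2) fun f => ?_
  constructor
  · intro hf
    have : Surjective (⇑e2 ∘ f ∘ ⇑e1.symm) :=
      e2.surjective.comp (hf.comp e1.symm.surjective)
    simpa [Equiv.arrowCongr] using this
  · intro hf b
    obtain ⟨a, ha⟩ := hf (e2 b)
    exact ⟨e1.symm a, e2.injective (by simpa [Equiv.arrowCongr] using ha)⟩

end Aux
lemma card_image_eq_card_surj {β : Type*} (R : ℕ) [Fintype β] [DecidableEq β] (T : Finset β) :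
    Fintype.card {y : Fin R → β // Finset.image y Finset.univ = T}
      = Fintype.card {g : Fin R → Fin T.card // Surjective g} := by
  classical
  rw [Fintype.card_congr (imageEqEquiv T)]
  exact card_surj_congr (Equiv.refl _)
    (Fintype.equivFinOfCardEq (Fintype.card_coe T))

lemma card_surj (R : ℕ) : ∀ m : ℕ,
    Fintype.card {f : Fin R → Fin m // Surjective f} = stirling2 R m * Nat.factorial m := by
  induction R with
  | zero =>
    intro m
    match m with
    | 0 =>
      rw [Fintype.card_eq_one_iff.mpr
        ⟨⟨Fin.elim0, fun b => b.elim0⟩, fun g => Subtype.ext (funext fun i => i.elim0)⟩]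
      simp [stirling2]
    | m + 1 =>
      rw [Fintype.card_eq_zero_iff.mpr ⟨fun f => (f.2 0).elim fun a _ => a.elim0⟩]
      simp [stirling2]
  | succ R ih =>
    intro m
    match m with
    | 0 =>
      rw [Fintype.card_eq_zero_iff.mpr ⟨fun f => (f.1 0).elim0⟩]
      simp [stirling2]
    | m + 1 =>
      classical
      -- decompose by the value at 0
      have e : {f : Fin (R + 1) → Fin (m + 1) // Surjective f}
          ≃ Σ v : Fin (m + 1), {g : Fin R → Fin (m + 1) // Surjective (Fin.cons v g)} :=
        { toFun := fun f => ⟨f.1 0, ⟨Fin.tail f.1, by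
            rw [Fin.cons_self_tail]; exact f.2⟩⟩
          invFun := fun p => ⟨Fin.cons p.1 p.2.1, p.2.2⟩
          left_inv := fun f => Subtype.ext (Fin.cons_self_tail f.1)
          right_inv := fun p => rfl }
      rw [Fintype.card_congr e, Fintype.card_sigma]
      have key : ∀ (v : Fin (m + 1)) (g : Fin R → Fin (m + 1)),
          Surjective (Fin.cons v g) ↔
            (Surjective g ∨ Finset.image g Finset.univ = ({v} : Finset (Fin (m + 1)))ᶜ) := by
        intro v g
        constructor
        · intro h
          by_cases hv : ∃ i, g i = v
          · left
            intro b
            obtain ⟨j, hj⟩ := h b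
            cases j using Fin.cases with
            | zero =>
              obtain ⟨i, hi⟩ := hv
              rw [Fin.cons_zero] at hj
              exact ⟨i, hi.trans hj⟩
            | succ j => exact ⟨j, by rwa [Fin.cons_succ] at hj⟩
          · right
            ext b
            simp only [Finset.mem_image, Finset.mem_univ, true_and, Finset.mem_compl,
              Finset.mem_singleton]
            constructor
            · rintro ⟨i, rfl⟩ rfl; exact hv ⟨i, rfl⟩
            · intro hb
              obtain ⟨j, hj⟩ := h b
              cases j using Fin.cases with
              | zero => rw [Fin.cons_zero] at hj; exact (hb hj.symm).elim
              | succ j => exact ⟨j, by rwa [Fin.cons_succ] at hj⟩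
        · rintro (h | h) b
          · obtain ⟨i, hi⟩ := h b
            exact ⟨i.succ, by rwa [Fin.cons_succ]⟩
          · by_cases hb : b = v
            · exact ⟨0, by rw [Fin.cons_zero, hb]⟩
            · have hbm : b ∈ Finset.image g Finset.univ := by
                rw [h]; simp [hb]
              obtain ⟨i, -, hi⟩ := Finset.mem_image.mp hbm
              exact ⟨i.succ, by rwa [Fin.cons_succ]⟩
      have hv : ∀ v : Fin (m + 1),
          Fintype.card {g : Fin R → Fin (m + 1) // Surjective (Fin.cons v g)}
            = stirling2 R (m + 1) * Nat.factorial (m + 1) + stirling2 R m * Nat.factorial m := by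
        intro v
        rw [Fintype.card_congr (Equiv.subtypeEquivRight (key v))]
        have disj : Disjoint (fun g : Fin R → Fin (m + 1) => Surjective g)
            (fun g : Fin R → Fin (m + 1) =>
              Finset.image g Finset.univ = ({v} : Finset (Fin (m + 1)))ᶜ) := by
          rw [disjoint_iff_inf_le]
          rintro g ⟨h1, h2⟩
          obtain ⟨i, hi⟩ := h1 v
          have hvm : v ∈ Finset.image g Finset.univ :=
            Finset.mem_image.mpr ⟨i, Finset.mem_univ i, hi⟩
          rw [h2] at hvm
          simp at hvm
        rw [Fintype.card_subtype_or_disjoint _ _ disj]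
        have h2 : Fintype.card {g : Fin R → Fin (m + 1) //
            Finset.image g Finset.univ = ({v} : Finset (Fin (m + 1)))ᶜ}
              = stirling2 R m * Nat.factorial m := by
          rw [card_image_eq_card_surj]
          have hc : (({v} : Finset (Fin (m + 1)))ᶜ).card = m := by
            rw [Finset.card_compl, Finset.card_singleton, Fintype.card_fin, Nat.add_sub_cancel]
          rw [hc, ih m]
        have h1 : Fintype.card {g : Fin R → Fin (m + 1) // Surjective g}
            = stirling2 R (m + 1) * Nat.factorial (m + 1) := ih (m + 1)
        rw [h1, h2]
      rw [Finset.sum_congr rfl fun v _ => hv v, Finset.sum_const, Finset.card_univ,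
        Fintype.card_fin, smul_eq_mul]
      simp only [stirling2, Nat.factorial_succ]
      ring
lemma card_image_comp {α β γ : Type*} [Fintype α] [DecidableEq β] [DecidableEq γ]
    (f : β → γ) (hf : Injective f) (y : α → β) :
    (Finset.image (f ∘ y) Finset.univ).card = (Finset.image y Finset.univ).card := by
  rw [← Finset.image_image, Finset.card_image_of_injective _ hf]

lemma card_imageCard_congr {β γ : Type*} [Fintype β] [DecidableEq β] [Fintype γ]
    [DecidableEq γ] (e : β ≃ γ) (R ℓ : ℕ) :
    Fintype.card {y : Fin R → β // (Finset.image y Finset.univ).card = ℓ}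
      = Fintype.card {y : Fin R → γ // (Finset.image y Finset.univ).card = ℓ} := by
  apply Fintype.card_congr
  refine Equiv.subtypeEquiv (Equiv.arrowCongr (Equiv.refl (Fin R)) e) fun y => ?_
  have : ⇑(Equiv.arrowCongr (Equiv.refl (Fin R)) e) y = e ∘ y := rfl
  rw [this, card_image_comp e e.injective y]

lemma card_imageCard (R k ℓ : ℕ) :
    Fintype.card {y : Fin R → Fin k // (Finset.image y Finset.univ).card = ℓ}
      = k.choose ℓ * (stirling2 R ℓ * Nat.factorial ℓ) := by
  classical
  have e := (Equiv.sigmaFiberEquiv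
      (fun y : {y : Fin R → Fin k // (Finset.image y Finset.univ).card = ℓ} =>
        (⟨Finset.image y.1 Finset.univ, y.2⟩ : {T : Finset (Fin k) // T.card = ℓ}))).symm
  rw [Fintype.card_congr e, Fintype.card_sigma]
  have hfib : ∀ T : {T : Finset (Fin k) // T.card = ℓ},
      Fintype.card {y' : {y : Fin R → Fin k // (Finset.image y Finset.univ).card = ℓ} //
          (⟨Finset.image y'.1 Finset.univ, y'.2⟩ : {T : Finset (Fin k) // T.card = ℓ}) = T}
        = stirling2 R ℓ * Nat.factorial ℓ := by
    intro T
    have e2 : {y' : {y : Fin R → Fin k // (Finset.image y Finset.univ).card = ℓ} //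
        (⟨Finset.image y'.1 Finset.univ, y'.2⟩ : {T : Finset (Fin k) // T.card = ℓ}) = T}
        ≃ {y : Fin R → Fin k // Finset.image y Finset.univ = T.1} :=
      { toFun := fun y' => ⟨y'.1.1, congrArg Subtype.val y'.2⟩
        invFun := fun y => ⟨⟨y.1, by rw [y.2]; exact T.2⟩, Subtype.ext y.2⟩
        left_inv := fun y' => Subtype.ext (Subtype.ext rfl)
        right_inv := fun y => Subtype.ext rfl }
    rw [Fintype.card_congr e2, card_image_eq_card_surj, T.2, card_surj]
  rw [Finset.sum_congr rfl fun T _ => hfib T, Finset.sum_const, Finset.card_univ,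
    Fintype.card_finset_len, Fintype.card_fin, smul_eq_mul]


/-- Symmetry counts for the Coupon Collector Channel: every input `x` is compatible with
exactly `C(k,ℓ)·S(R,ℓ)·ℓ!` outputs having `ℓ` distinct motifs, and every output `y` with
`ℓ` distinct motifs is compatible with exactly `C(n-ℓ,k-ℓ)` inputs; hence in the transition
matrix restricted to outputs with `ℓ` distinct motifs, rows are permutations of each other
and columns are permutations of each other. -/
theorem stmt8 (n k R ℓ : ℕ) (hk : 0 < k) (hkn : k < n) (hR : 0 < R)
    (hℓ1 : 1 ≤ ℓ) (hℓ2 : ℓ ≤ min k R) :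
    (∀ x : Finset (Fin n), x.card = k →
        Fintype.card {y : Fin R → Fin n //
            (∀ i, y i ∈ x) ∧ (Finset.image y Finset.univ).card = ℓ}
          = k.choose ℓ * stirling2 R ℓ * ℓ.factorial) ∧
    (∀ y : Fin R → Fin n, (Finset.image y Finset.univ).card = ℓ →
        Fintype.card {x : Finset (Fin n) // x.card = k ∧ ∀ i, y i ∈ x}
          = (n - ℓ).choose (k - ℓ)) := by
  classical
  constructor
  · intro x hx
    have e0 : {y : Fin R → Fin n // (∀ i, y i ∈ x) ∧ (Finset.image y Finset.univ).card = ℓ}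
        ≃ {y' : Fin R → ↥x // (Finset.image y' Finset.univ).card = ℓ} :=
      { toFun := fun y => ⟨fun i => ⟨y.1 i, y.2.1 i⟩, by
          rw [← card_image_comp Subtype.val Subtype.val_injective
            (fun i => (⟨y.1 i, y.2.1 i⟩ : ↥x))]
          exact y.2.2⟩
        invFun := fun y' => ⟨fun i => (y'.1 i : Fin n), fun i => (y'.1 i).2, by
          rw [show (fun i => ((y'.1 i : Fin n))) = Subtype.val ∘ y'.1 from rfl,
            card_image_comp _ Subtype.val_injective]
          exact y'.2⟩
        left_inv := fun y => Subtype.ext rfl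
        right_inv := fun y' => Subtype.ext rfl }
    rw [Fintype.card_congr e0,
      card_imageCard_congr (Fintype.equivFinOfCardEq (by rw [Fintype.card_coe, hx])) R ℓ,
      card_imageCard, mul_assoc]
  · intro y hy
    set T : Finset (Fin n) := Finset.image y Finset.univ with hT
    have hsub : ∀ x : Finset (Fin n), (∀ i, y i ∈ x) ↔ T ⊆ x := by
      intro x
      rw [hT, Finset.image_subset_iff]
      simp
    have hℓk : ℓ ≤ k := le_trans hℓ2 (min_le_left _ _)
    have e2 : {x : Finset (Fin n) // x.card = k ∧ ∀ i, y i ∈ x}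
        ≃ {s : Finset (Fin n) // s ⊆ Tᶜ ∧ s.card = k - ℓ} :=
      { toFun := fun x => ⟨x.1 \ T, by
          refine ⟨fun a ha => ?_, ?_⟩
          · rw [Finset.mem_compl]
            exact (Finset.mem_sdiff.mp ha).2
          · rw [Finset.card_sdiff_of_subset ((hsub x.1).mp x.2.2), x.2.1, hy]⟩
        invFun := fun s => ⟨s.1 ∪ T, by
          have disj : Disjoint s.1 T := by
            rw [Finset.disjoint_left]
            intro a ha
            exact Finset.mem_compl.mp (s.2.1 ha)
          refine ⟨?_, (hsub _).mpr Finset.subset_union_right⟩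
          rw [Finset.card_union_of_disjoint disj, s.2.2, hy, Nat.sub_add_cancel hℓk]⟩
        left_inv := fun x => Subtype.ext (Finset.sdiff_union_of_subset ((hsub x.1).mp x.2.2))
        right_inv := fun s => Subtype.ext (by
          have disj : Disjoint s.1 T := by
            rw [Finset.disjoint_left]
            intro a ha
            exact Finset.mem_compl.mp (s.2.1 ha)
          exact Finset.union_sdiff_cancel_right disj) }
    rw [Fintype.card_congr e2, Fintype.card_subtype]
    have : Finset.univ.filter (fun s : Finset (Fin n) => s ⊆ Tᶜ ∧ s.card = k - ℓ)
        = Tᶜ.powersetCard (k - ℓ) := by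
      ext s
      simp [Finset.mem_powersetCard]
    rw [this, Finset.card_powersetCard, Finset.card_compl, hy, Fintype.card_fin]
end

section
/- For the interference-free split-library channel, the capacity satisfies C_{a×CC}(R) = a · Σ_{r=0}^{R} C_CC(ñ,k̃,r) · C(R,r) · (1/a)^r · (1 − 1/a)^{R−r} ≤ a · C_CC(ñ, k̃, R) for all R, with C_CC nondecreasing in its read argument. -/
/-- Capacity of the interference-free Coupon Collector Channel with library size `n`,
symbol weight `k`, and `r` reads (equal to `0` when `r = 0`). -/
noncomputable def Ccc (n k r : ℕ) : ℝ :=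
  if r = 0 then 0
  else
    Real.logb 2 (n.choose k) -
      ((k : ℝ) ^ r)⁻¹ *
        ∑ ℓ ∈ Finset.Icc 1 (min k r),
          (k.choose ℓ * stirling2 r ℓ * ℓ.factorial : ℝ) *
            Real.logb 2 (((n - ℓ).choose (k - ℓ) : ℝ))

namespace Stmt19Aux

lemma stirling2_eq_zero : ∀ {n k : ℕ}, n < k → stirling2 n k = 0
  | 0, 0, h => absurd h (lt_irrefl 0)
  | 0, _ + 1, _ => rfl
  | n + 1, 0, h => by omega
  | n + 1, k + 1, h => by
      have h1 : n < k + 1 := by omega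
      have h2 : n < k := by omega
      show (k + 1) * stirling2 n (k + 1) + stirling2 n k = 0
      rw [stirling2_eq_zero h1, stirling2_eq_zero h2]
      ring

lemma stirling2_succ_zero (r : ℕ) : stirling2 (r + 1) 0 = 0 := rfl

lemma stirling2_succ_succ (r m : ℕ) :
    stirling2 (r + 1) (m + 1) = (m + 1) * stirling2 r (m + 1) + stirling2 r m := rfl

/-- the log-term `g`. -/
noncomputable def g (n k ℓ : ℕ) : ℝ :=
  Real.logb 2 (((n - ℓ).choose (k - ℓ) : ℝ))

lemma choose_pos_aux {n k : ℕ} (hkn : k ≤ n) (ℓ : ℕ) :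
    0 < (n - ℓ).choose (k - ℓ) :=
  Nat.choose_pos (by omega)

lemma g_succ_le {n k : ℕ} (hk : 0 < k) (hkn : k < n) {m : ℕ} (hm : m < k) :
    g n k (m + 1) ≤ g n k m := by
  unfold g
  have h1 : 0 < (n - (m + 1)).choose (k - (m + 1)) := choose_pos_aux hkn.le _
  have h2 : 0 < (n - m).choose (k - m) := choose_pos_aux hkn.le _
  have harg : (n - (m + 1)).choose (k - (m + 1)) ≤ (n - m).choose (k - m) := by
    have e1 : n - m = (n - (m + 1)) + 1 := by omega
    have e2 : k - m = (k - (m + 1)) + 1 := by omega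
    rw [e1, e2, Nat.choose_succ_succ]
    exact Nat.le_add_right _ _
  exact (Real.logb_le_logb (by norm_num) (by exact_mod_cast h1)
    (by exact_mod_cast h2)).mpr (by exact_mod_cast harg)

lemma g_nonneg {n k : ℕ} (hkn : k ≤ n) (ℓ : ℕ) : 0 ≤ g n k ℓ := by
  unfold g
  apply Real.logb_nonneg (by norm_num)
  exact_mod_cast choose_pos_aux hkn ℓ

/-- partial expectation sum. -/
noncomputable def U (n k r : ℕ) : ℝ :=
  ∑ ℓ ∈ Finset.range (k + 1),
    ((k.choose ℓ * ℓ.factorial * stirling2 r ℓ : ℕ) : ℝ) * g n k ℓ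

lemma Ccc_eq_U {n k : ℕ} (r : ℕ) (hr : 1 ≤ r) :
    Ccc n k r = Real.logb 2 (n.choose k) - ((k : ℝ) ^ r)⁻¹ * U n k r := by
  unfold Ccc
  rw [if_neg (by omega)]
  congr 1
  congr 1
  unfold U
  rw [Finset.sum_subset (f := fun ℓ =>
      (k.choose ℓ * stirling2 r ℓ * ℓ.factorial : ℝ) *
        Real.logb 2 (((n - ℓ).choose (k - ℓ) : ℝ)))
    (show Finset.Icc 1 (min k r) ⊆ Finset.range (k + 1) by
      intro x hx
      simp only [Finset.mem_Icc] at hx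
      simp only [Finset.mem_range]
      omega)]
  · apply Finset.sum_congr rfl
    intro x _
    unfold g
    push_cast
    ring
  · intro x hx hx'
    simp only [Finset.mem_range] at hx
    simp only [Finset.mem_Icc] at hx'
    rcases Nat.eq_zero_or_pos x with h0 | h1
    · subst h0
      obtain ⟨r', rfl⟩ : ∃ r', r = r' + 1 := ⟨r - 1, by omega⟩
      rw [stirling2_succ_zero]
      push_cast
      ring
    · have : r < x := by omega
      rw [stirling2_eq_zero this]
      push_cast
      ring

lemma U_succ_le {n k : ℕ} (hk : 0 < k) (hkn : k < n) (r : ℕ) :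
    U n k (r + 1) ≤ (k : ℝ) * U n k r := by
  -- peel off the 0 term and use the Stirling recurrence
  have hzero : ((k.choose 0 * Nat.factorial 0 * stirling2 (r + 1) 0 : ℕ) : ℝ) * g n k 0 = 0 := by
    rw [stirling2_succ_zero]; push_cast; ring
  have expand : U n k (r + 1)
      = (∑ m ∈ Finset.range k,
          ((k.choose (m+1) * (m+1).factorial * ((m+1) * stirling2 r (m+1)) : ℕ) : ℝ) * g n k (m+1))
      + (∑ m ∈ Finset.range k,
          ((k.choose m * m.factorial * ((k - m) * stirling2 r m) : ℕ) : ℝ) * g n k (m+1)) := by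
    unfold U
    rw [Finset.sum_range_succ', hzero, add_zero, ← Finset.sum_add_distrib]
    apply Finset.sum_congr rfl
    intro m hm
    simp only [Finset.mem_range] at hm
    rw [stirling2_succ_succ]
    have hc : k.choose (m+1) * (m+1).factorial = k.choose m * m.factorial * (k - m) := by
      rw [Nat.factorial_succ, ← Nat.mul_assoc, Nat.mul_comm (k.choose (m+1)) (m+1),
        Nat.mul_comm (m+1) (k.choose (m+1)), Nat.choose_succ_right_eq]
      ring
    rw [← add_mul]
    congr 1
    push_cast [hc]
    ring
  rw [expand]
  -- bound second sum termwise by replacing g (m+1) with g m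
  have hB : (∑ m ∈ Finset.range k,
        ((k.choose m * m.factorial * ((k - m) * stirling2 r m) : ℕ) : ℝ) * g n k (m+1))
      ≤ ∑ m ∈ Finset.range k,
        ((k.choose m * m.factorial * ((k - m) * stirling2 r m) : ℕ) : ℝ) * g n k m := by
    apply Finset.sum_le_sum
    intro m hm
    simp only [Finset.mem_range] at hm
    exact mul_le_mul_of_nonneg_left (g_succ_le hk hkn hm) (by positivity)
  refine le_trans (add_le_add le_rfl hB) ?_
  -- now show A + D = k * U r
  have hA : (∑ m ∈ Finset.range k,
        ((k.choose (m+1) * (m+1).factorial * ((m+1) * stirling2 r (m+1)) : ℕ) : ℝ) * g n k (m+1))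
      = ∑ ℓ ∈ Finset.range (k + 1),
        ((k.choose ℓ * ℓ.factorial * (ℓ * stirling2 r ℓ) : ℕ) : ℝ) * g n k ℓ := by
    rw [Finset.sum_range_succ' (fun ℓ =>
      ((k.choose ℓ * ℓ.factorial * (ℓ * stirling2 r ℓ) : ℕ) : ℝ) * g n k ℓ) k]
    simp
  have hD : (∑ m ∈ Finset.range k,
        ((k.choose m * m.factorial * ((k - m) * stirling2 r m) : ℕ) : ℝ) * g n k m)
      = ∑ ℓ ∈ Finset.range (k + 1),
        ((k.choose ℓ * ℓ.factorial * ((k - ℓ) * stirling2 r ℓ) : ℕ) : ℝ) * g n k ℓ := by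
    rw [Finset.sum_range_succ]
    simp
  rw [hA, hD, ← Finset.sum_add_distrib]
  unfold U
  rw [Finset.mul_sum]
  apply le_of_eq
  apply Finset.sum_congr rfl
  intro ℓ hℓ
  simp only [Finset.mem_range] at hℓ
  have hℓk : ℓ ≤ k := by omega
  have : ((k - ℓ : ℕ) : ℝ) = (k : ℝ) - (ℓ : ℝ) := by
    push_cast [Nat.cast_sub hℓk]; ring
  push_cast [this]
  ring

lemma Ccc_one {n k : ℕ} (hk : 0 < k) :
    Ccc n k 1 = g n k 0 - g n k 1 := by
  unfold Ccc
  rw [if_neg (by omega)]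
  have hmin : min k 1 = 1 := min_eq_right hk
  rw [hmin, Finset.Icc_self, Finset.sum_singleton]
  have h11 : stirling2 1 1 = 1 := rfl
  have : g n k 0 = Real.logb 2 (n.choose k) := by
    unfold g; simp
  rw [h11, Nat.choose_one_right, Nat.factorial_one, ← this]
  unfold g
  have hk0 : (k : ℝ) ≠ 0 := by exact_mod_cast hk.ne'
  field_simp
  simp

lemma Ccc_step {n k : ℕ} (hk : 0 < k) (hkn : k < n) (r : ℕ) :
    Ccc n k r ≤ Ccc n k (r + 1) := by
  rcases Nat.eq_zero_or_pos r with rfl | hr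
  · rw [show Ccc n k 0 = 0 from if_pos rfl, Ccc_one hk]
    have := g_succ_le hk hkn (m := 0) hk
    linarith
  · rw [Ccc_eq_U r hr, Ccc_eq_U (r+1) (by omega)]
    have hkpos : (0 : ℝ) < (k : ℝ) := by exact_mod_cast hk
    have key : ((k : ℝ) ^ (r+1))⁻¹ * U n k (r+1) ≤ ((k : ℝ) ^ r)⁻¹ * U n k r := by
      have h1 : ((k : ℝ) ^ (r+1))⁻¹ * U n k (r+1)
          ≤ ((k : ℝ) ^ (r+1))⁻¹ * ((k : ℝ) * U n k r) :=
        mul_le_mul_of_nonneg_left (U_succ_le hk hkn r) (by positivity)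
      refine h1.trans (le_of_eq ?_)
      rw [pow_succ]
      field_simp
    linarith

lemma Ccc_mono {n k : ℕ} (hk : 0 < k) (hkn : k < n) :
    ∀ r r' : ℕ, r ≤ r' → Ccc n k r ≤ Ccc n k r' := by
  intro r r' h
  induction r' with
  | zero => simp_all
  | succ m ih =>
    rcases Nat.lt_or_ge r (m + 1) with hlt | hge
    · exact (ih (by omega)).trans (Ccc_step hk hkn m)
    · have : r = m + 1 := by omega
      subst this; rfl

end Stmt19Aux

open Stmt19Aux in
/-- Library-splitting capacity: `Ccc` is nondecreasing in the number of reads, and the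
split-library capacity `a · Σ_r Ccc(ñ,k̃,r)·C(R,r)·(1/a)^r·(1−1/a)^(R−r)` is at most
`a · Ccc(ñ,k̃,R)` for all `R`. -/
theorem stmt19 (a nt kt : ℕ) (ha : 1 ≤ a) (hkt : 0 < kt) (hktn : kt < nt) :
    (∀ r r' : ℕ, r ≤ r' → Ccc nt kt r ≤ Ccc nt kt r') ∧
    (∀ R : ℕ,
      (a : ℝ) * ∑ r ∈ Finset.range (R + 1),
          Ccc nt kt r * (R.choose r : ℝ) * (1 / (a : ℝ)) ^ r * (1 - 1 / (a : ℝ)) ^ (R - r)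
        ≤ (a : ℝ) * Ccc nt kt R) := by
  have hmono := Ccc_mono hkt hktn
  refine ⟨hmono, ?_⟩
  intro R
  have ha1 : (1 : ℝ) ≤ (a : ℝ) := by exact_mod_cast ha
  have hp : (0 : ℝ) ≤ 1 / (a : ℝ) := by positivity
  have hq : (0 : ℝ) ≤ 1 - 1 / (a : ℝ) := by
    have : 1 / (a : ℝ) ≤ 1 := by
      rw [div_le_one (by linarith)]; exact ha1
    linarith
  apply mul_le_mul_of_nonneg_left _ (by positivity)
  have hbin : ∑ r ∈ Finset.range (R + 1),
      (R.choose r : ℝ) * (1 / (a : ℝ)) ^ r * (1 - 1 / (a : ℝ)) ^ (R - r) = 1 := by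
    calc ∑ r ∈ Finset.range (R + 1),
          (R.choose r : ℝ) * (1 / (a : ℝ)) ^ r * (1 - 1 / (a : ℝ)) ^ (R - r)
        = ∑ r ∈ Finset.range (R + 1),
          (1 / (a : ℝ)) ^ r * (1 - 1 / (a : ℝ)) ^ (R - r) * (R.choose r : ℝ) := by
          apply Finset.sum_congr rfl; intro x _; ring
      _ = (1 / (a : ℝ) + (1 - 1 / (a : ℝ))) ^ R := (add_pow _ _ R).symm
      _ = 1 := by rw [show (1 / (a : ℝ) + (1 - 1 / (a : ℝ))) = 1 by ring, one_pow]
  calc ∑ r ∈ Finset.range (R + 1),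
        Ccc nt kt r * (R.choose r : ℝ) * (1 / (a : ℝ)) ^ r * (1 - 1 / (a : ℝ)) ^ (R - r)
      ≤ ∑ r ∈ Finset.range (R + 1),
        Ccc nt kt R * ((R.choose r : ℝ) * (1 / (a : ℝ)) ^ r * (1 - 1 / (a : ℝ)) ^ (R - r)) := by
        apply Finset.sum_le_sum
        intro r hr
        simp only [Finset.mem_range] at hr
        have h1 : Ccc nt kt r ≤ Ccc nt kt R := hmono r R (by omega)
        have hw : (0 : ℝ) ≤ (R.choose r : ℝ) * (1 / (a : ℝ)) ^ r * (1 - 1 / (a : ℝ)) ^ (R - r) := by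
          positivity
        calc Ccc nt kt r * (R.choose r : ℝ) * (1 / (a : ℝ)) ^ r * (1 - 1 / (a : ℝ)) ^ (R - r)
            = Ccc nt kt r * ((R.choose r : ℝ) * (1 / (a : ℝ)) ^ r * (1 - 1 / (a : ℝ)) ^ (R - r)) := by ring
          _ ≤ Ccc nt kt R * ((R.choose r : ℝ) * (1 / (a : ℝ)) ^ r * (1 - 1 / (a : ℝ)) ^ (R - r)) :=
            mul_le_mul_of_nonneg_right h1 hw
    _ = Ccc nt kt R * ∑ r ∈ Finset.range (R + 1),
          (R.choose r : ℝ) * (1 / (a : ℝ)) ^ r * (1 - 1 / (a : ℝ)) ^ (R - r) := by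
        rw [Finset.mul_sum]
    _ = Ccc nt kt R := by rw [hbin, mul_one]
end
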